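/- For the SEIAR Covid model with state x = (S, E, I, A, R, μ₁, μ₂, γ, p), the two vector fields ξ₁ = (1, 0, 0, 0, -1, 0, 0, 0, 0) and ξ₂ = (E, -E, 0, 0, 0, 0, 0, γ, 0) are each orthogonal to the differentials of the functions h₁ = I, h₂ = A, h₃ = S + E + R, h₄ = -Aμ₂ - Eγ(p-1), h₅ = (1-p)/p (assuming p ≠ 0), h₆ = μ₂(Aμ₂ + Eγ(p-1)) + μ₁((1-p)/p)(Eγp - Iμ₁), and h̃₁ = γpE - μ₁I; that is, dh·ξᵢ = 0 for each such h and i = 1, 2. -/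

import Mathlib

/-- SEIAR model: state x = (S, E, I, A, R, μ₁, μ₂, γ, p) as x 0, ..., x 8. -/
theorem stmt_13
    (ξ₁ ξ₂ : (Fin 9 → ℝ) → (Fin 9 → ℝ))
    (hξ₁ : ∀ x, ξ₁ x = ![1, 0, 0, 0, -1, 0, 0, 0, 0])
    (hξ₂ : ∀ x, ξ₂ x = ![x 1, -(x 1), 0, 0, 0, 0, 0, x 7, 0])
    (h1 h2 h3 h4 h5 h6 ht1 : (Fin 9 → ℝ) → ℝ)
    (hh1 : ∀ x, h1 x = x 2)
    (hh2 : ∀ x, h2 x = x 3)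
    (hh3 : ∀ x, h3 x = x 0 + x 1 + x 4)
    (hh4 : ∀ x, h4 x = -(x 3 * x 6) - x 1 * x 7 * (x 8 - 1))
    (hh5 : ∀ x, h5 x = (1 - x 8) / x 8)
    (hh6 : ∀ x, h6 x = x 6 * (x 3 * x 6 + x 1 * x 7 * (x 8 - 1)) +
        x 5 * ((1 - x 8) / x 8) * (x 1 * x 7 * x 8 - x 2 * x 5))
    (hht1 : ∀ x, ht1 x = x 7 * x 8 * x 1 - x 5 * x 2) :
    ∀ x : Fin 9 → ℝ, x 8 ≠ 0 →
      ∀ h ∈ ({h1, h2, h3, h4, h5, h6, ht1} : Set ((Fin 9 → ℝ) → ℝ)),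
        fderiv ℝ h x (ξ₁ x) = 0 ∧ fderiv ℝ h x (ξ₂ x) = 0 := by
  open ContinuousLinearMap in
  have e1 : h1 = fun y => y 2 := funext hh1
  have e2 : h2 = fun y => y 3 := funext hh2
  have e3 : h3 = fun y => y 0 + y 1 + y 4 := funext hh3
  have e4 : h4 = fun y => -(y 3 * y 6) - y 1 * y 7 * (y 8 - 1) := funext hh4
  have e5 : h5 = fun y => (1 - y 8) * (y 8)⁻¹ :=
    funext fun y => (hh5 y).trans (div_eq_mul_inv _ _)
  have e6 : h6 = fun y => y 6 * (y 3 * y 6 + y 1 * y 7 * (y 8 - 1)) +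
      y 5 * ((1 - y 8) * (y 8)⁻¹) * (y 1 * y 7 * y 8 - y 2 * y 5) :=
    funext fun y => (hh6 y).trans (by rw [div_eq_mul_inv])
  have et : ht1 = fun y => y 7 * y 8 * y 1 - y 5 * y 2 := funext hht1
  subst e1 e2 e3 e4 e5 e6 et
  intro x hx h hmem
  have hp : ∀ i : Fin 9, HasFDerivAt (fun y : Fin 9 → ℝ => y i)
      (proj i : (Fin 9 → ℝ) →L[ℝ] ℝ) x := fun i => by
    exact (proj i : (Fin 9 → ℝ) →L[ℝ] ℝ).hasFDerivAt
  have a0 : (![1, 0, 0, 0, -1, 0, 0, 0, 0] : Fin 9 → ℝ) 0 = 1 := rfl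
  have a1 : (![1, 0, 0, 0, -1, 0, 0, 0, 0] : Fin 9 → ℝ) 1 = 0 := rfl
  have a2 : (![1, 0, 0, 0, -1, 0, 0, 0, 0] : Fin 9 → ℝ) 2 = 0 := rfl
  have a3 : (![1, 0, 0, 0, -1, 0, 0, 0, 0] : Fin 9 → ℝ) 3 = 0 := rfl
  have a4 : (![1, 0, 0, 0, -1, 0, 0, 0, 0] : Fin 9 → ℝ) 4 = -1 := rfl
  have a5 : (![1, 0, 0, 0, -1, 0, 0, 0, 0] : Fin 9 → ℝ) 5 = 0 := rfl
  have a6 : (![1, 0, 0, 0, -1, 0, 0, 0, 0] : Fin 9 → ℝ) 6 = 0 := rfl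
  have a7 : (![1, 0, 0, 0, -1, 0, 0, 0, 0] : Fin 9 → ℝ) 7 = 0 := rfl
  have a8 : (![1, 0, 0, 0, -1, 0, 0, 0, 0] : Fin 9 → ℝ) 8 = 0 := rfl
  have b0 : (![x 1, -(x 1), 0, 0, 0, 0, 0, x 7, 0] : Fin 9 → ℝ) 0 = x 1 := rfl
  have b1 : (![x 1, -(x 1), 0, 0, 0, 0, 0, x 7, 0] : Fin 9 → ℝ) 1 = -(x 1) := rfl
  have b2 : (![x 1, -(x 1), 0, 0, 0, 0, 0, x 7, 0] : Fin 9 → ℝ) 2 = 0 := rfl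
  have b3 : (![x 1, -(x 1), 0, 0, 0, 0, 0, x 7, 0] : Fin 9 → ℝ) 3 = 0 := rfl
  have b4 : (![x 1, -(x 1), 0, 0, 0, 0, 0, x 7, 0] : Fin 9 → ℝ) 4 = 0 := rfl
  have b5 : (![x 1, -(x 1), 0, 0, 0, 0, 0, x 7, 0] : Fin 9 → ℝ) 5 = 0 := rfl
  have b6 : (![x 1, -(x 1), 0, 0, 0, 0, 0, x 7, 0] : Fin 9 → ℝ) 6 = 0 := rfl
  have b7 : (![x 1, -(x 1), 0, 0, 0, 0, 0, x 7, 0] : Fin 9 → ℝ) 7 = x 7 := rfl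
  have b8 : (![x 1, -(x 1), 0, 0, 0, 0, 0, x 7, 0] : Fin 9 → ℝ) 8 = 0 := rfl
  have hinv : HasFDerivAt (fun y : Fin 9 → ℝ => (y 8)⁻¹)
      ((-mulLeftRight ℝ ℝ (x 8)⁻¹ (x 8)⁻¹).comp (proj 8)) x := by
    have := (hasFDerivAt_inv' (𝕜 := ℝ) (R := ℝ) hx).comp x (hp 8)
    simpa [Function.comp_def] using this
  simp only [Set.mem_insert_iff, Set.mem_singleton_iff] at hmem
  rcases hmem with rfl | rfl | rfl | rfl | rfl | rfl | rfl
  · exact ⟨by rw [(hp 2).fderiv, hξ₁]; simp [a2],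
      by rw [(hp 2).fderiv, hξ₂]; simp [b2]⟩
  · exact ⟨by rw [(hp 3).fderiv, hξ₁]; simp [a3],
      by rw [(hp 3).fderiv, hξ₂]; simp [b3]⟩
  · have hd := ((hp 0).add (hp 1)).add (hp 4)
    exact ⟨by erw [hd.fderiv, hξ₁]; simp [a0, a1, a4],
      by erw [hd.fderiv, hξ₂]; simp [b0, b1, b4]⟩
  · have hd := (((hp 3).mul (hp 6)).neg.sub
      (((hp 1).mul (hp 7)).mul ((hp 8).sub_const 1)))
    refine ⟨?_, ?_⟩ <;> [erw [hd.fderiv, hξ₁]; erw [hd.fderiv, hξ₂]] <;>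
      simp [a1, a3, a6, a7, a8, b1, b3, b6, b7, b8] <;> ring
  · have hd := ((hp 8).const_sub 1).mul hinv
    refine ⟨?_, ?_⟩ <;> [erw [hd.fderiv, hξ₁]; erw [hd.fderiv, hξ₂]] <;>
      simp [a8, b8]
  · have hd := ((hp 6).mul (((hp 3).mul (hp 6)).add
        (((hp 1).mul (hp 7)).mul ((hp 8).sub_const 1)))).add
      ((((hp 5).mul (((hp 8).const_sub 1).mul hinv))).mul
        ((((hp 1).mul (hp 7)).mul (hp 8)).sub ((hp 2).mul (hp 5))))
    refine ⟨?_, ?_⟩ <;> [erw [hd.fderiv, hξ₁]; erw [hd.fderiv, hξ₂]] <;>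
      simp only [ContinuousLinearMap.add_apply, ContinuousLinearMap.smul_apply,
        ContinuousLinearMap.sub_apply, ContinuousLinearMap.neg_apply,
        ContinuousLinearMap.comp_apply, ContinuousLinearMap.proj_apply,
        ContinuousLinearMap.mulLeftRight_apply, smul_eq_mul,
        a1, a2, a3, a5, a6, a7, a8, b1, b2, b3, b5, b6, b7, b8] <;>
      field_simp <;> ring
  · have hd := (((hp 7).mul (hp 8)).mul (hp 1)).sub ((hp 5).mul (hp 2))
    refine ⟨?_, ?_⟩ <;> [erw [hd.fderiv, hξ₁]; erw [hd.fderiv, hξ₂]] <;>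
      simp [a1, a2, a5, a7, a8, b1, b2, b5, b7, b8] <;> ring
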